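/- Let σ₁ ≤ σ₂ ≤ ... ≤ σ_d be positive real numbers with ∏_{i=1}^d σ_i = 1. Then ((Σ_{i=1}^d σ_i)/d)^{d-1} ≥ (Σ_{i=1}^d 1/σ_i)/d. -/

import Mathlib

open Finset

/-- Unweighted AM-GM. -/
lemma amgm_aux {ι : Type*} (s : Finset ι) (hs : s.Nonempty) (x : ι → ℝ)
    (hx : ∀ i ∈ s, 0 ≤ x i) :
    ∏ i ∈ s, x i ≤ ((∑ i ∈ s, x i) / s.card) ^ s.card := by
  have hn : (0:ℝ) < s.card := by exact_mod_cast hs.card_pos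
  have hsum : 0 ≤ ∑ i ∈ s, x i := Finset.sum_nonneg hx
  have hP : 0 ≤ ∏ i ∈ s, x i := Finset.prod_nonneg hx
  have h := Real.geom_mean_le_arith_mean_weighted s (fun _ => ((s.card:ℝ))⁻¹) x
    (fun i _ => by positivity)
    (by simp [Finset.sum_const, mul_comm]; field_simp) hx
  have hprod : ∏ i ∈ s, x i ^ ((s.card:ℝ))⁻¹ = (∏ i ∈ s, x i) ^ ((s.card:ℝ))⁻¹ :=
    Real.finset_prod_rpow s x hx _
  rw [hprod] at h
  have hrhs : ∑ i ∈ s, ((s.card:ℝ))⁻¹ * x i = (∑ i ∈ s, x i) / s.card := by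
    rw [← Finset.mul_sum]; ring
  rw [hrhs] at h
  have h2 := Real.rpow_le_rpow (Real.rpow_nonneg hP _) h (Nat.cast_nonneg s.card)
  rwa [← Real.rpow_mul hP, inv_mul_cancel₀ hn.ne', Real.rpow_one,
    Real.rpow_natCast] at h2

/-- Key inequality: `A^m (A + (m+1)T) (m+2)^m ≤ ((m+1)A + T)^(m+1)`. -/
lemma key_aux (m : ℕ) (A T : ℝ) (hA : 0 ≤ A) (hT : 0 ≤ T) :
    A ^ m * (A + (m+1) * T) * ((m:ℝ)+2) ^ m ≤ (((m:ℝ)+1) * A + T) ^ (m+1) := by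
  set y : Fin (m+1) → ℝ := Fin.cons (A + ((m:ℝ)+1) * T) (fun _ : Fin m => ((m:ℝ)+2) * A)
    with hy
  have hnn : ∀ i ∈ Finset.univ, 0 ≤ y i := by
    intro i _
    refine Fin.cases ?_ (fun j => ?_) i
    · simpa [hy] using add_nonneg hA (mul_nonneg (by positivity) hT)
    · simpa [hy] using mul_nonneg (by positivity : (0:ℝ) ≤ (m:ℝ)+2) hA
  have h := amgm_aux Finset.univ Finset.univ_nonempty y hnn
  have hprod : ∏ i, y i = (A + ((m:ℝ)+1) * T) * (((m:ℝ)+2) * A) ^ m := by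
    rw [Fin.prod_univ_succ]
    simp [hy]
  have hsum : ∑ i, y i = ((m:ℝ)+1) * (((m:ℝ)+1) * A + T) := by
    rw [Fin.sum_univ_succ]
    simp [hy, Finset.sum_const]
    ring
  have hcard : (Finset.univ : Finset (Fin (m+1))).card = m + 1 := by simp
  rw [hprod, hsum, hcard] at h
  have hm1 : ((m:ℝ)+1) ≠ 0 := by positivity
  have h3 : ((m:ℝ)+1) * (((m:ℝ)+1) * A + T) / ((m+1 : ℕ):ℝ) = ((m:ℝ)+1) * A + T := by
    push_cast; field_simp
  rw [h3] at h
  calc A ^ m * (A + (m+1) * T) * ((m:ℝ)+2) ^ m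
      = (A + ((m:ℝ)+1) * T) * (((m:ℝ)+2) * A) ^ m := by rw [mul_pow]; ring
    _ ≤ (((m:ℝ)+1) * A + T) ^ (m+1) := h

/-- Maclaurin's inequality, case `k = d-1`. -/
lemma maclaurin_aux {ι : Type*} [DecidableEq ι] (s : Finset ι) (hs : s.Nonempty)
    (x : ι → ℝ) (hx : ∀ i ∈ s, 0 ≤ x i) :
    ∑ i ∈ s, ∏ j ∈ s.erase i, x j
      ≤ s.card * ((∑ i ∈ s, x i) / s.card) ^ (s.card - 1) := by
  induction hs using Finset.Nonempty.cons_induction with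
  | singleton a => simp
  | cons a t ha ht ih =>
    have hx' : ∀ i ∈ t, 0 ≤ x i := fun i hi => hx i (Finset.mem_cons_of_mem hi)
    have hxa : 0 ≤ x a := hx a (Finset.mem_cons_self a t)
    set n := t.card with hn
    have hn1 : 1 ≤ n := ht.card_pos
    have hnR : (0:ℝ) < n := by exact_mod_cast ht.card_pos
    set S := ∑ i ∈ t, x i with hS
    have hSnn : 0 ≤ S := Finset.sum_nonneg hx'
    set A := S / n with hA
    have hAnn : 0 ≤ A := div_nonneg hSnn hnR.le
    -- split LHS
    have hsplit : ∑ i ∈ cons a t ha, ∏ j ∈ (cons a t ha).erase i, x j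
        = (∏ j ∈ t, x j) + x a * ∑ i ∈ t, ∏ j ∈ t.erase i, x j := by
      rw [Finset.sum_cons]
      congr 1
      · congr 1
        rw [Finset.cons_eq_insert, Finset.erase_insert ha]
      · rw [Finset.mul_sum]
        apply Finset.sum_congr rfl
        intro i hi
        have hia : a ≠ i := fun h => ha (h ▸ hi)
        rw [Finset.cons_eq_insert, Finset.erase_insert_of_ne hia,
          Finset.prod_insert (fun h => ha (Finset.mem_of_mem_erase h))]
    have hIH := ih hx'
    have hAM : ∏ j ∈ t, x j ≤ A ^ n := by
      have := amgm_aux t ht x hx'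
      rwa [← hS, ← hn, ← hA] at this
    obtain ⟨m, hm⟩ : ∃ m, n = m + 1 := ⟨n - 1, (Nat.succ_pred_eq_of_pos ht.card_pos).symm⟩
    have hmn : (n:ℝ) = (m:ℝ) + 1 := by rw [hm]; push_cast; ring
    have hkey := key_aux m A (x a) hAnn hxa
    have hstep : (∏ j ∈ t, x j) + x a * ∑ i ∈ t, ∏ j ∈ t.erase i, x j
        ≤ A ^ m * (A + ((m:ℝ)+1) * x a) := by
      have h1 : (n:ℝ) * A ^ (n - 1) = ((m:ℝ)+1) * A ^ m := by
        rw [hm]; push_cast; simp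
      have h2 : x a * ∑ i ∈ t, ∏ j ∈ t.erase i, x j ≤ x a * ((m:ℝ)+1) * A ^ m := by
        rw [mul_assoc]
        apply mul_le_mul_of_nonneg_left _ hxa
        calc ∑ i ∈ t, ∏ j ∈ t.erase i, x j ≤ (n:ℝ) * A ^ (n-1) := hIH
          _ = ((m:ℝ)+1) * A ^ m := h1
      have h3 : A ^ n = A ^ m * A := by rw [hm, pow_succ]
      nlinarith [hAM]
    -- assemble
    have hcard : (cons a t ha).card = n + 1 := by rw [Finset.card_cons, hn]
    have hsumc : ∑ i ∈ cons a t ha, x i = x a + S := by rw [Finset.sum_cons, hS]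
    rw [hsplit, hcard, hsumc, hm]
    have hfin : A ^ m * (A + ((m:ℝ)+1) * x a)
        ≤ ((m+1+1 : ℕ):ℝ) * ((x a + S) / ((m+1+1 : ℕ):ℝ)) ^ (m + 1 + 1 - 1) := by
      have hSA : S = ((m:ℝ)+1) * A := by rw [hA, hmn]; field_simp
      have e1 : ((m+1+1 : ℕ):ℝ) = (m:ℝ)+2 := by push_cast; ring
      have hpow : (0:ℝ) < ((m:ℝ)+2) ^ m := by positivity
      have hrw : ((m+1+1:ℕ):ℝ) * ((x a + S) / ((m+1+1 : ℕ):ℝ)) ^ (m+1+1-1)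
          = (((m:ℝ)+1) * A + x a) ^ (m+1) / ((m:ℝ)+2) ^ m := by
        rw [e1, div_pow]
        have h4 : (x a + S) = ((m:ℝ)+1)*A + x a := by rw [hSA]; ring
        rw [h4, pow_succ]
        rw [Nat.add_sub_cancel]
        field_simp
        ring
      rw [hrw, le_div_iff₀ hpow]
      exact hkey
    exact le_trans hstep hfin

/-- If `σ₁ ≤ σ₂ ≤ ⋯ ≤ σ_d` are positive reals with `∏ σᵢ = 1`, then
`((∑ σᵢ)/d)^(d-1) ≥ (∑ 1/σᵢ)/d`. -/
theorem stmt4 (d : ℕ) (hd : 1 ≤ d) (σ : Fin d → ℝ)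
    (hpos : ∀ i, 0 < σ i) (hmono : Monotone σ)
    (hprod : ∏ i, σ i = 1) :
    ((∑ i, σ i) / d) ^ (d - 1) ≥ (∑ i, 1 / σ i) / d := by
  have hne : (Finset.univ : Finset (Fin d)).Nonempty := by
    rw [Finset.univ_nonempty_iff]
    exact Fin.pos_iff_nonempty.mp hd
  have h := maclaurin_aux Finset.univ hne σ (fun i _ => (hpos i).le)
  have herase : ∀ i : Fin d, ∏ j ∈ Finset.univ.erase i, σ j = 1 / σ i := by
    intro i
    have h1 := Finset.mul_prod_erase Finset.univ σ (Finset.mem_univ i)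
    rw [hprod] at h1
    rw [eq_div_iff (hpos i).ne', mul_comm]
    exact h1
  rw [Finset.sum_congr rfl (fun i _ => herase i)] at h
  have hcard : (Finset.univ : Finset (Fin d)).card = d := by simp
  rw [hcard] at h
  have hdR : (0:ℝ) < d := by exact_mod_cast hd
  rw [ge_iff_le, div_le_iff₀ hdR]
  linarith [h]
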